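/- Let 0.5 < ε < 1, c > 0 with Q(c) ≤ 1 − ε^{1/2^n}. If m satisfies (1/2)[c − Q⁻¹(Q(c)/(ε^{−1/2^n} − 1))]² ≤ m ≤ 2c², then Q(c − √(2m)) / (Q(c) + Q(c − √(2m))) ≥ ε^{1/2^n}. -/

import Mathlib

/-- The standard Gaussian tail function `Q(x) = (1/√(2π)) ∫ₓ^∞ e^{-t²/2} dt`. -/
noncomputable def gaussQ (x : ℝ) : ℝ :=
  ∫ t in Set.Ioi x, (1 / Real.sqrt (2 * Real.pi)) * Real.exp (-(t ^ 2) / 2)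

/-- The inverse of the Gaussian tail function on `(0,1)`. -/
noncomputable def gaussQinv : ℝ → ℝ := Function.invFun gaussQ

open MeasureTheory Set Real

namespace GaussAux

noncomputable def gf (t : ℝ) : ℝ := (1 / Real.sqrt (2 * Real.pi)) * Real.exp (-(t ^ 2) / 2)

lemma gf_eq : gf = fun t => (1 / Real.sqrt (2 * Real.pi)) * Real.exp (-(1/2) * t ^ 2) := by
  funext t
  unfold gf
  congr 1
  congr 1
  ring

lemma gf_int : Integrable gf := by
  rw [gf_eq]
  exact (integrable_exp_neg_mul_sq (by norm_num : (0:ℝ) < 1/2)).const_mul _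

lemma sqrt_two_pi_pos : 0 < Real.sqrt (2 * Real.pi) :=
  Real.sqrt_pos.2 (by positivity)

lemma gf_pos (t : ℝ) : 0 < gf t := by
  unfold gf
  positivity

lemma gf_le (t : ℝ) : gf t ≤ 1 / Real.sqrt (2 * Real.pi) := by
  unfold gf
  have h1 : Real.exp (-(t ^ 2) / 2) ≤ 1 := by
    rw [Real.exp_le_one_iff]; nlinarith [sq_nonneg t]
  calc 1 / Real.sqrt (2 * Real.pi) * Real.exp (-(t ^ 2) / 2)
      ≤ 1 / Real.sqrt (2 * Real.pi) * 1 :=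
        mul_le_mul_of_nonneg_left h1 (by positivity)
    _ = 1 / Real.sqrt (2 * Real.pi) := mul_one _

lemma gf_total : ∫ t, gf t = 1 := by
  rw [gf_eq, MeasureTheory.integral_const_mul]
  have h := integral_gaussian (1/2 : ℝ)
  simp only [neg_mul] at h ⊢
  rw [h]
  rw [show Real.pi / (1/2) = 2 * Real.pi by ring]
  field_simp

lemma gaussQ_eq (x : ℝ) : gaussQ x = ∫ t in Set.Ioi x, gf t := rfl

lemma gaussQ_anti : Antitone gaussQ := by
  intro x y hxy
  rw [gaussQ_eq, gaussQ_eq]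
  refine setIntegral_mono_set gf_int.integrableOn ?_ ?_
  · filter_upwards with t using (gf_pos t).le
  · exact HasSubset.Subset.eventuallyLE (Ioi_subset_Ioi hxy)

lemma gaussQ_pos (x : ℝ) : 0 < gaussQ x := by
  rw [gaussQ_eq]
  rw [setIntegral_pos_iff_support_of_nonneg_ae
    (by filter_upwards with t using (gf_pos t).le) gf_int.integrableOn]
  have : Function.support gf = Set.univ := by
    ext t; simp [Function.mem_support, (gf_pos t).ne']
  rw [this, Set.univ_inter]
  simp [Real.volume_Ioi]

lemma gaussQ_neg (x : ℝ) : gaussQ (-x) = 1 - gaussQ x := by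
  have hev : ∀ t : ℝ, gf (-t) = gf t := by
    intro t; unfold gf; rw [neg_pow]; norm_num
  have h1 : gaussQ (-x) = ∫ t in Set.Iic x, gf t := by
    rw [gaussQ_eq]
    have h := integral_comp_neg_Ioi (-x) gf
    simp only [hev, neg_neg] at h
    exact h
  have h2 := intervalIntegral.integral_Iic_add_Ioi (b := x) (f := gf) (μ := volume)
    gf_int.integrableOn gf_int.integrableOn
  rw [gf_total] at h2
  rw [h1, gaussQ_eq, ← h2]
  ring

lemma gaussQ_sub {x y : ℝ} (hxy : x ≤ y) :
    gaussQ x - gaussQ y = ∫ t in Set.Ioc x y, gf t := by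
  have h : (∫ t in Set.Ioc x y, gf t) + ∫ t in Set.Ioi y, gf t = ∫ t in Set.Ioi x, gf t := by
    rw [← MeasureTheory.setIntegral_union (Set.Ioc_disjoint_Ioi le_rfl) measurableSet_Ioi
      gf_int.integrableOn gf_int.integrableOn, Set.Ioc_union_Ioi_eq_Ioi hxy]
  rw [gaussQ_eq, gaussQ_eq, ← h]
  ring

lemma gaussQ_lipschitz {x y : ℝ} (hxy : x ≤ y) :
    gaussQ x - gaussQ y ≤ (1 / Real.sqrt (2 * Real.pi)) * (y - x) := by
  rw [gaussQ_sub hxy]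
  calc (∫ t in Set.Ioc x y, gf t) ≤ ∫ _t in Set.Ioc x y, (1 / Real.sqrt (2 * Real.pi)) := by
        refine setIntegral_mono_on gf_int.integrableOn (integrableOn_const ?_)
          measurableSet_Ioc (fun t _ => gf_le t)
        rw [Real.volume_Ioc]; exact ENNReal.ofReal_ne_top
    _ = (1 / Real.sqrt (2 * Real.pi)) * (y - x) := by
        rw [setIntegral_const, Real.volume_real_Ioc_of_le hxy, smul_eq_mul]
        ring

lemma gaussQ_continuous : Continuous gaussQ := by
  rw [Metric.continuous_iff]
  intro x ε hε
  refine ⟨ε * Real.sqrt (2 * Real.pi), by positivity, fun y hy => ?_⟩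
  rw [Real.dist_eq] at hy ⊢
  have key : ∀ a b : ℝ, a ≤ b → |b - a| < ε * Real.sqrt (2 * Real.pi) →
      |gaussQ b - gaussQ a| < ε := by
    intro a b hab habs
    have h1 := gaussQ_lipschitz hab
    have h2 : gaussQ b ≤ gaussQ a := gaussQ_anti hab
    have h3 : |gaussQ b - gaussQ a| = gaussQ a - gaussQ b := by
      rw [abs_sub_comm, abs_of_nonneg (by linarith)]
    rw [abs_of_nonneg (by linarith)] at habs
    have hs := sqrt_two_pi_pos
    rw [h3]
    calc gaussQ a - gaussQ b ≤ (1 / Real.sqrt (2 * Real.pi)) * (b - a) := h1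
      _ < (1 / Real.sqrt (2 * Real.pi)) * (ε * Real.sqrt (2 * Real.pi)) :=
          mul_lt_mul_of_pos_left habs (by positivity)
      _ = ε := by field_simp
  rcases le_total y x with h | h
  · rw [abs_sub_comm] at hy
    have := key y x h hy
    rwa [abs_sub_comm] at this
  · exact key x y h hy

lemma gaussQ_tail_tendsto :
    Filter.Tendsto (fun n : ℕ => gaussQ n) Filter.atTop (nhds 0) := by
  have h := MeasureTheory.tendsto_setIntegral_of_antitone (μ := volume)
    (s := fun n : ℕ => Set.Ioi (n : ℝ)) (f := gf)
    (fun n => measurableSet_Ioi)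
    (fun i j hij => Ioi_subset_Ioi (by exact_mod_cast hij))
    ⟨0, gf_int.integrableOn⟩
  have hempty : ⋂ n : ℕ, Set.Ioi (n : ℝ) = ∅ := by
    ext t
    simp only [Set.mem_iInter, Set.mem_Ioi, Set.mem_empty_iff_false, iff_false, not_forall, not_lt]
    obtain ⟨n, hn⟩ := exists_nat_gt t
    exact ⟨n, hn.le⟩
  rw [hempty] at h
  simpa [gaussQ_eq] using h

lemma gaussQ_surj {a : ℝ} (ha0 : 0 < a) (ha1 : a < 1) : ∃ x, gaussQ x = a := by
  obtain ⟨n, hn⟩ := (gaussQ_tail_tendsto.eventually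
    (eventually_lt_nhds (by simp [lt_min_iff]; constructor <;> linarith :
      (0:ℝ) < min a (1 - a)))).exists
  have hn1 : gaussQ n < a := lt_of_lt_of_le hn (min_le_left _ _)
  have hn2 : a ≤ gaussQ (-(n : ℝ)) := by
    rw [gaussQ_neg]
    have := lt_of_lt_of_le hn (min_le_right _ _)
    linarith
  have hmem : a ∈ Set.Icc (gaussQ (n : ℝ)) (gaussQ (-(n : ℝ))) := ⟨hn1.le, hn2⟩
  have hsub := intermediate_value_Icc' (by
      have : (0:ℝ) ≤ n := Nat.cast_nonneg n
      linarith : -(n : ℝ) ≤ (n : ℝ))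
    gaussQ_continuous.continuousOn
  obtain ⟨x, _, hx⟩ := hsub hmem
  exact ⟨x, hx⟩

end GaussAux

set_option maxHeartbeats 1000000 in
theorem low_mean_correct_prob_bound (n : ℕ) (ε c m : ℝ)
    (hε0 : 0.5 < ε) (hε1 : ε < 1) (hc : 0 < c)
    (hQc : gaussQ c ≤ 1 - ε ^ ((1 : ℝ) / 2 ^ n))
    (hml : (1 / 2) * (c - gaussQinv (gaussQ c / (ε ^ (-((1 : ℝ) / 2 ^ n)) - 1))) ^ 2 ≤ m)
    (hmu : m ≤ 2 * c ^ 2) :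
    gaussQ (c - Real.sqrt (2 * m)) / (gaussQ c + gaussQ (c - Real.sqrt (2 * m)))
      ≥ ε ^ ((1 : ℝ) / 2 ^ n) := by
  have hεpos : (0:ℝ) < ε := lt_trans (by norm_num) hε0
  set u : ℝ := (1 : ℝ) / 2 ^ n with hu
  have hu0 : 0 < u := by positivity
  have hu1 : u ≤ 1 := by
    rw [hu]
    rw [div_le_one (by positivity)]
    exact one_le_pow₀ (by norm_num)
  set η : ℝ := ε ^ u with hη
  have hη1 : η < 1 := Real.rpow_lt_one hεpos.le hε1 hu0
  have hηε : ε ≤ η := by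
    have := Real.rpow_le_rpow_of_exponent_ge hεpos hε1.le hu1
    simpa using this
  have hεhalf : (1:ℝ)/2 < ε := by norm_num at hε0; linarith
  have hηhalf : (1:ℝ)/2 < η := lt_of_lt_of_le hεhalf hηε
  have hη0 : 0 < η := by linarith
  have hinv : ε ^ (-u) = η⁻¹ := by
    rw [Real.rpow_neg hεpos.le, hη]
  have hden : ε ^ (-u) - 1 = (1 - η) / η := by
    rw [hinv]; field_simp
  have hQcpos := GaussAux.gaussQ_pos c
  set a : ℝ := gaussQ c / (ε ^ (-u) - 1) with ha
  have h1η : 0 < 1 - η := by linarith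
  have ha_eq : a * (1 - η) = gaussQ c * η := by
    rw [ha, hden]
    field_simp
  have ha0 : 0 < a := by
    rw [ha, hden]
    positivity
  have ha_le : a ≤ η := by
    have h1 : a * (1 - η) ≤ (1 - η) * η := by
      rw [ha_eq]
      have := mul_le_mul_of_nonneg_right hQc hη0.le
      linarith
    nlinarith
  have haQc : gaussQ c ≤ a := by
    nlinarith [ha_eq]
  have ha1 : a < 1 := lt_of_le_of_lt ha_le hη1
  -- invFun property
  obtain ⟨x₀, hx₀⟩ := GaussAux.gaussQ_surj ha0 ha1
  have hQinv : gaussQ (gaussQinv a) = a := Function.invFun_eq ⟨x₀, hx₀⟩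
  set x := gaussQinv a with hx
  -- from hml : (c - x)^2 ≤ 2m
  have hsq : (c - x) ^ 2 ≤ 2 * m := by linarith
  have habs : |c - x| ≤ Real.sqrt (2 * m) := by
    rw [← Real.sqrt_sq_eq_abs]
    exact Real.sqrt_le_sqrt hsq
  have hle : c - Real.sqrt (2 * m) ≤ x := by
    have := abs_le.1 habs
    linarith [this.2]
  have hQ2 : a ≤ gaussQ (c - Real.sqrt (2 * m)) := by
    rw [← hQinv]
    exact GaussAux.gaussQ_anti hle
  set Q1 := gaussQ c
  set Q2 := gaussQ (c - Real.sqrt (2 * m))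
  have hQ2pos : 0 < Q2 := GaussAux.gaussQ_pos _
  have hkey : Q1 * η ≤ (1 - η) * Q2 := by
    have := mul_le_mul_of_nonneg_right hQ2 h1η.le
    nlinarith [ha_eq]
  rw [ge_iff_le, le_div_iff₀ (by positivity)]
  nlinarith
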